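/- Fix n ≥ 2. Let (T, →) be a countably infinite tournament with the extension property (for all disjoint finite A, B ⊆ T there is x ∉ A ∪ B with x → a for all a ∈ A and b → x for all b ∈ B), and let 𝕋^∞[Iₙ] be the directed graph on T × Fin n with edges (t,a) → (s,b) iff t → s. Then the distinguishing number of 𝕋^∞[Iₙ] equals n + 1: there is a distinguishing coloring with n+1 colors and none with n colors. -/

import Mathlib

section Aux

variable {T : Type*} (R : T → T → Prop)

attribute [local instance] Classical.propDecidable

/-- The extension property of the random tournament. -/
def ExtProp : Prop :=
  ∀ A B : Finset T, Disjoint A B →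
    ∃ x, x ∉ A ∧ x ∉ B ∧ (∀ a ∈ A, R x a) ∧ (∀ b ∈ B, R b x)

/-- One step of the construction of the rigid chain. -/
noncomputable def rstep (hext : ExtProp R) (l : List T) (p : T × T) : T :=
  if h : p.1 ≠ p.2 ∧ p.1 ∉ l.toFinset ∧ p.2 ∉ l.toFinset then
    (hext {p.2} (insert p.1 l.toFinset) (by
      simp only [Finset.disjoint_singleton_left, Finset.mem_insert, not_or]
      exact ⟨Ne.symm h.1, h.2.2⟩)).choose
  else (hext ∅ l.toFinset (Finset.disjoint_empty_left _)).choose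

lemma rstep_spec (hext : ExtProp R) (l : List T) (p : T × T) :
    rstep R hext l p ∉ l.toFinset ∧ (∀ b ∈ l.toFinset, R b (rstep R hext l p)) ∧
    (p.1 ≠ p.2 → p.1 ∉ l.toFinset → p.2 ∉ l.toFinset →
      R p.1 (rstep R hext l p) ∧ R (rstep R hext l p) p.2 ∧
      rstep R hext l p ≠ p.1 ∧ rstep R hext l p ≠ p.2) := by
  by_cases h : p.1 ≠ p.2 ∧ p.1 ∉ l.toFinset ∧ p.2 ∉ l.toFinset
  · have hd : Disjoint ({p.2} : Finset T) (insert p.1 l.toFinset) := by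
      simp only [Finset.disjoint_singleton_left, Finset.mem_insert, not_or]
      exact ⟨Ne.symm h.1, h.2.2⟩
    have hr : rstep R hext l p = (hext {p.2} (insert p.1 l.toFinset) hd).choose := by
      unfold rstep; rw [dif_pos h]
    obtain ⟨hx1, hx2, hA, hB⟩ := (hext {p.2} (insert p.1 l.toFinset) hd).choose_spec
    rw [hr]
    refine ⟨fun hm => hx2 (Finset.mem_insert_of_mem hm),
      fun b hb => hB b (Finset.mem_insert_of_mem hb),
      fun _ _ _ => ⟨hB p.1 (Finset.mem_insert_self _ _),
        hA p.2 (Finset.mem_singleton_self _), ?_, ?_⟩⟩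
    · intro hq; rw [hq] at hx2; exact hx2 (Finset.mem_insert_self _ _)
    · intro hq; rw [hq] at hx1; exact hx1 (Finset.mem_singleton_self _)
  · have hr : rstep R hext l p = (hext ∅ l.toFinset (Finset.disjoint_empty_left _)).choose := by
      unfold rstep; rw [dif_neg h]
    obtain ⟨hx1, hx2, hA, hB⟩ := (hext ∅ l.toFinset (Finset.disjoint_empty_left _)).choose_spec
    rw [hr]
    exact ⟨hx2, fun b hb => hB b hb, fun h1 h2 h3 => absurd ⟨h1, h2, h3⟩ h⟩

noncomputable def rseq (hext : ExtProp R) (e : ℕ → T × T) : ℕ → List T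
  | 0 => []
  | k+1 => rstep R hext (rseq hext e k) (e k) :: rseq hext e k

/-- The rigid chain. -/
noncomputable def dd (hext : ExtProp R) (e : ℕ → T × T) (k : ℕ) : T :=
  rstep R hext (rseq R hext e k) (e k)

lemma mem_rseq (hext : ExtProp R) (e : ℕ → T × T) :
    ∀ k i, i < k → dd R hext e i ∈ rseq R hext e k := by
  intro k
  induction k with
  | zero => omega
  | succ k ih =>
    intro i hi
    rcases Nat.lt_succ_iff_lt_or_eq.1 hi with hi | rfl
    · exact List.mem_cons_of_mem _ (ih i hi)
    · exact List.mem_cons_self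

lemma rseq_mem (hext : ExtProp R) (e : ℕ → T × T) :
    ∀ k t, t ∈ rseq R hext e k → ∃ i, i < k ∧ t = dd R hext e i := by
  intro k
  induction k with
  | zero => intro t ht; simp [rseq] at ht
  | succ k ih =>
    intro t ht
    rcases List.mem_cons.1 ht with rfl | ht
    · exact ⟨k, Nat.lt_succ_self _, rfl⟩
    · obtain ⟨i, hi, rfl⟩ := ih t ht
      exact ⟨i, by omega, rfl⟩

lemma dd_chain (hirr : ∀ x, ¬ R x x) (htot : ∀ x y : T, x ≠ y → (R x y ↔ ¬ R y x))
    (hext : ExtProp R) (e : ℕ → T × T) {i j : ℕ} (hij : i < j) :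
    R (dd R hext e i) (dd R hext e j) :=
  (rstep_spec R hext (rseq R hext e j) (e j)).2.1 _
    (List.mem_toFinset.2 (mem_rseq R hext e j i hij))

lemma dd_ne (hext : ExtProp R) (e : ℕ → T × T) {i j : ℕ} (hij : i < j) :
    dd R hext e i ≠ dd R hext e j := by
  intro h
  have hm : dd R hext e j ∈ (rseq R hext e j).toFinset :=
    h ▸ List.mem_toFinset.2 (mem_rseq R hext e j i hij)
  exact (rstep_spec R hext (rseq R hext e j) (e j)).1 hm

lemma dd_injective (hext : ExtProp R) (e : ℕ → T × T) :
    Function.Injective (dd R hext e) := by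
  intro i j h
  rcases lt_trichotomy i j with hij | rfl | hij
  · exact absurd h (dd_ne R hext e hij)
  · rfl
  · exact absurd h.symm (dd_ne R hext e hij)

lemma dd_lt (hirr : ∀ x, ¬ R x x) (htot : ∀ x y : T, x ≠ y → (R x y ↔ ¬ R y x))
    (hext : ExtProp R) (e : ℕ → T × T) {i j : ℕ}
    (h : R (dd R hext e i) (dd R hext e j)) : i < j := by
  rcases lt_trichotomy i j with hij | rfl | hij
  · exact hij
  · exact absurd h (hirr _)
  · exact absurd (dd_chain R hirr htot hext e hij)
      ((htot _ _ (Ne.symm (dd_ne R hext e hij))).1 h)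

lemma strictMono_nat_le {u : ℕ → ℕ} (hu : StrictMono u) : ∀ k, k ≤ u k := by
  intro k
  induction k with
  | zero => exact Nat.zero_le _
  | succ k ih => exact Nat.succ_le_of_lt (lt_of_le_of_lt ih (hu (Nat.lt_succ_self k)))

lemma exists_rigid_set {T : Type*} [Countable T] [Infinite T] (R : T → T → Prop)
    (hirr : ∀ x, ¬ R x x)
    (htot : ∀ x y : T, x ≠ y → (R x y ↔ ¬ R y x))
    (hext : ExtProp R) :
    ∃ D : Set T, ∀ π : T → T, Function.Bijective π →
      (∀ t t', R t t' ↔ R (π t) (π t')) → (∀ t, t ∈ D ↔ π t ∈ D) → ∀ t, π t = t := by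
  obtain ⟨e, he⟩ := exists_surjective_nat (T × T)
  classical
  refine ⟨Set.range (dd R hext e), ?_⟩
  intro π hbij hedge hD
  set d := dd R hext e with hd
  -- separation property
  have hsep : ∀ x y : T, x ≠ y → x ∉ Set.range d → y ∉ Set.range d →
      ∃ k, R x (d k) ∧ ¬ R y (d k) := by
    intro x y hxy hx hy
    obtain ⟨k, hk⟩ := he (x, y)
    have h1 : x ∉ (rseq R hext e k).toFinset := by
      intro hm
      obtain ⟨i, _, rfl⟩ := rseq_mem R hext e k x (List.mem_toFinset.1 hm)
      exact hx ⟨i, rfl⟩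
    have h2 : y ∉ (rseq R hext e k).toFinset := by
      intro hm
      obtain ⟨i, _, rfl⟩ := rseq_mem R hext e k y (List.mem_toFinset.1 hm)
      exact hy ⟨i, rfl⟩
    have hdk : d k = rstep R hext (rseq R hext e k) (x, y) := by
      rw [hd]; unfold dd; rw [hk]
    obtain ⟨hr1, hr2, hne1, hne2⟩ :=
      (rstep_spec R hext (rseq R hext e k) (x, y)).2.2 hxy h1 h2
    rw [← hdk] at hr1 hr2 hne1 hne2
    refine ⟨k, hr1, fun hry => ?_⟩
    exact ((htot y (d k) (Ne.symm hne2)).1 hry) hr2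
  -- the inverse map
  set ρ := (Equiv.ofBijective π hbij).symm with hρ
  have hπρ : ∀ t, π (ρ t) = t := fun t => (Equiv.ofBijective π hbij).apply_symm_apply t
  have hDρ : ∀ t, t ∈ Set.range d ↔ ρ t ∈ Set.range d := by
    intro t
    conv_lhs => rw [← hπρ t]
    exact (hD (ρ t)).symm
  -- the chain is fixed
  have hf : ∀ k, ∃ m, π (d k) = d m := by
    intro k
    obtain ⟨m, hm⟩ := (hD (d k)).1 ⟨k, rfl⟩
    exact ⟨m, hm.symm⟩
  choose f hfs using hf
  have hg : ∀ k, ∃ m, ρ (d k) = d m := by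
    intro k
    obtain ⟨m, hm⟩ := (hDρ (d k)).1 ⟨k, rfl⟩
    exact ⟨m, hm.symm⟩
  choose g hgs using hg
  have hfm : StrictMono f := by
    intro i j hij
    have := (hedge (d i) (d j)).1 (dd_chain R hirr htot hext e hij)
    rw [hfs, hfs] at this
    exact dd_lt R hirr htot hext e this
  have hgm : StrictMono g := by
    intro i j hij
    have h0 := dd_chain R hirr htot hext e hij
    have h1 : R (π (ρ (d i))) (π (ρ (d j))) := by rw [hπρ, hπρ]; exact h0
    have h2 := (hedge (ρ (d i)) (ρ (d j))).2 h1
    rw [hgs, hgs] at h2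
    exact dd_lt R hirr htot hext e h2
  have hgf : ∀ k, g (f k) = k := by
    intro k
    have : d (g (f k)) = d k := by
      rw [← hgs, ← hfs]
      exact (Equiv.ofBijective π hbij).symm_apply_apply (d k)
    exact dd_injective R hext e this
  have hfk : ∀ k, f k = k := by
    intro k
    have h1 : k ≤ f k := strictMono_nat_le hfm k
    have h2 : f k ≤ g (f k) := strictMono_nat_le hgm (f k)
    rw [hgf k] at h2
    omega
  have hdfix : ∀ k, π (d k) = d k := fun k => by rw [hfs, hfk]
  -- conclusion
  intro t
  by_contra hne
  have htD : t ∉ Set.range d := by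
    rintro ⟨k, rfl⟩
    exact hne (hdfix k)
  have hwD : π t ∉ Set.range d := fun hw => htD ((hD t).2 hw)
  obtain ⟨k, h1, h2⟩ := hsep t (π t) (fun h => hne h.symm) htD hwD
  refine h2 ?_
  have := (hedge t (d k)).1 h1
  rwa [hdfix k] at this

/-- A good partial isomorphism, as a list of pairs. -/
def GoodPI {T : Type*} (R : T → T → Prop) (l : List (T × T)) : Prop :=
  (l.map Prod.fst).Nodup ∧ (l.map Prod.snd).Nodup ∧
    ∀ p ∈ l, ∀ q ∈ l, p.1 ≠ q.1 → (R p.1 q.1 ↔ R p.2 q.2)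

lemma goodPI_swap {T : Type*} {R : T → T → Prop} {l : List (T × T)}
    (hl : GoodPI R l) : GoodPI R (l.map Prod.swap) := by
  obtain ⟨h1, h2, h3⟩ := hl
  refine ⟨?_, ?_, ?_⟩
  · rw [List.map_map]
    have : (Prod.fst ∘ Prod.swap : T × T → T) = Prod.snd := rfl
    rw [this]; exact h2
  · rw [List.map_map]
    have : (Prod.snd ∘ Prod.swap : T × T → T) = Prod.fst := rfl
    rw [this]; exact h1
  · intro p hp q hq hne
    obtain ⟨p', hp', rfl⟩ := List.mem_map.1 hp
    obtain ⟨q', hq', rfl⟩ := List.mem_map.1 hq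
    have hne' : p'.1 ≠ q'.1 := by
      intro h
      exact hne (congrArg Prod.snd (List.inj_on_of_nodup_map h1 hp' hq' h))
    exact (h3 p' hp' q' hq' hne').symm

lemma goodPI_extend_fst {T : Type*} {R : T → T → Prop}
    (htot : ∀ x y : T, x ≠ y → (R x y ↔ ¬ R y x))
    (hext : ExtProp R) {l : List (T × T)}
    (hl : GoodPI R l) (x : T) (hx : x ∉ l.map Prod.fst) :
    ∃ y, GoodPI R ((x, y) :: l) := by
  classical
  have hxne : ∀ p ∈ l, x ≠ p.1 := fun p hp h => hx (List.mem_map.2 ⟨p, hp, h.symm⟩)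
  set A := (l.toFinset.filter (fun q => R x q.1)).image Prod.snd with hA
  set B := (l.toFinset.filter (fun q => R q.1 x)).image Prod.snd with hB
  have memA : ∀ b, b ∈ A ↔ ∃ p ∈ l, R x p.1 ∧ p.2 = b := by
    intro b
    simp [hA, Finset.mem_image, Finset.mem_filter, List.mem_toFinset, and_assoc]
  have memB : ∀ b, b ∈ B ↔ ∃ p ∈ l, R p.1 x ∧ p.2 = b := by
    intro b
    simp [hB, Finset.mem_image, Finset.mem_filter, List.mem_toFinset, and_assoc]
  have hdisj : Disjoint A B := by
    rw [Finset.disjoint_left]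
    intro b hbA hbB
    obtain ⟨p, hp, hr1, hpb⟩ := (memA b).1 hbA
    obtain ⟨q, hq, hr2, hqb⟩ := (memB b).1 hbB
    have hpq : p = q := List.inj_on_of_nodup_map hl.2.1 hp hq (hpb.trans hqb.symm)
    subst hpq
    exact ((htot x p.1 (hxne p hp)).1 hr1) hr2
  obtain ⟨y, hyA, hyB, hA', hB'⟩ := hext A B hdisj
  have hyne : ∀ p ∈ l, y ≠ p.2 := by
    intro p hp he
    by_cases hr : R x p.1
    · exact hyA (he ▸ (memA y).2 ⟨p, hp, hr, he.symm⟩)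
    · have hr2 : R p.1 x := by
        by_contra h'
        exact hr ((htot x p.1 (hxne p hp)).2 h')
      exact hyB ((memB y).2 ⟨p, hp, hr2, he.symm⟩)
  refine ⟨y, ?_, ?_, ?_⟩
  · rw [List.map_cons, List.nodup_cons]
    exact ⟨hx, hl.1⟩
  · rw [List.map_cons, List.nodup_cons]
    refine ⟨fun hm => ?_, hl.2.1⟩
    obtain ⟨p, hp, hpy⟩ := List.mem_map.1 hm
    exact hyne p hp hpy.symm
  · intro p hp q hq hne
    rcases List.mem_cons.1 hp with rfl | hp <;> rcases List.mem_cons.1 hq with rfl | hq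
    · exact absurd rfl hne
    · -- p = (x,y), q ∈ l
      constructor
      · intro hr
        exact hA' q.2 ((memA q.2).2 ⟨q, hq, hr, rfl⟩)
      · intro hr
        by_contra hnr
        have h2 : R q.1 x := by
          by_contra h'
          exact hnr ((htot x q.1 hne).2 h')
        have h3 : R q.2 y := hB' q.2 ((memB q.2).2 ⟨q, hq, h2, rfl⟩)
        exact ((htot y q.2 (hyne q hq)).1 hr) h3
    · -- p ∈ l, q = (x,y)
      constructor
      · intro hr
        exact hB' p.2 ((memB p.2).2 ⟨p, hp, hr, rfl⟩)
      · intro hr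
        by_contra hnr
        have h2 : R x p.1 := by
          by_contra h'
          have := (htot p.1 x hne).2
          exact hnr (this (fun hxp => h' hxp))
        have h3 : R y p.2 := hA' p.2 ((memA p.2).2 ⟨p, hp, h2, rfl⟩)
        exact ((htot p.2 y fun h => hyne p hp h.symm).1 hr) h3
    · exact hl.2.2 p hp q hq hne

lemma goodPI_extend_snd {T : Type*} {R : T → T → Prop}
    (htot : ∀ x y : T, x ≠ y → (R x y ↔ ¬ R y x))
    (hext : ExtProp R) {l : List (T × T)}
    (hl : GoodPI R l) (y : T) (hy : y ∉ l.map Prod.snd) :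
    ∃ x, GoodPI R ((x, y) :: l) := by
  have hy' : y ∉ (l.map Prod.swap).map Prod.fst := by
    rw [List.map_map]
    have : (Prod.fst ∘ Prod.swap : T × T → T) = Prod.snd := rfl
    rwa [this]
  obtain ⟨x, hx⟩ := goodPI_extend_fst htot hext (goodPI_swap hl) y hy'
  refine ⟨x, ?_⟩
  have := goodPI_swap hx
  have heq : ((y, x) :: l.map Prod.swap).map Prod.swap = (x, y) :: l := by
    rw [List.map_cons, List.map_map]
    have h2 : (Prod.swap ∘ Prod.swap : T × T → T × T) = id := by
      funext p; simp
    rw [h2, List.map_id]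
    rfl
  rwa [heq] at this

lemma exists_nontrivial_auto {T : Type*} [Countable T] [Infinite T] (R : T → T → Prop)
    (hirr : ∀ x, ¬ R x x)
    (htot : ∀ x y : T, x ≠ y → (R x y ↔ ¬ R y x))
    (hext : ExtProp R) :
    ∃ π : T → T, Function.Bijective π ∧ (∀ t t', R t t' ↔ R (π t) (π t')) ∧
      ∃ t, π t ≠ t := by
  classical
  obtain ⟨x₀, y₀, hxy⟩ := exists_pair_ne T
  obtain ⟨eT, heT⟩ := exists_surjective_nat T
  have pushF : ∀ (l : {l : List (T × T) // GoodPI R l}) (x : T),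
      ∃ l' : {l : List (T × T) // GoodPI R l},
        (∀ p ∈ l.1, p ∈ l'.1) ∧ x ∈ l'.1.map Prod.fst := by
    intro l x
    by_cases hx : x ∈ l.1.map Prod.fst
    · exact ⟨l, fun p hp => hp, hx⟩
    · obtain ⟨y, hy⟩ := goodPI_extend_fst htot hext l.2 x hx
      exact ⟨⟨(x, y) :: l.1, hy⟩, fun p hp => List.mem_cons_of_mem _ hp,
        List.mem_map.2 ⟨(x, y), List.mem_cons_self, rfl⟩⟩
  have pushS : ∀ (l : {l : List (T × T) // GoodPI R l}) (y : T),
      ∃ l' : {l : List (T × T) // GoodPI R l},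
        (∀ p ∈ l.1, p ∈ l'.1) ∧ y ∈ l'.1.map Prod.snd := by
    intro l y
    by_cases hy : y ∈ l.1.map Prod.snd
    · exact ⟨l, fun p hp => hp, hy⟩
    · obtain ⟨x, hx⟩ := goodPI_extend_snd htot hext l.2 y hy
      exact ⟨⟨(x, y) :: l.1, hx⟩, fun p hp => List.mem_cons_of_mem _ hp,
        List.mem_map.2 ⟨(x, y), List.mem_cons_self, rfl⟩⟩
  choose F hF1 hF2 using pushF
  choose G hG1 hG2 using pushS
  have hgood0 : GoodPI R [(x₀, y₀)] := by
    refine ⟨List.nodup_singleton _, List.nodup_singleton _, ?_⟩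
    intro p hp q hq hne
    rw [List.mem_singleton] at hp hq
    subst hp; subst hq
    exact absurd rfl hne
  set L : ℕ → {l : List (T × T) // GoodPI R l} :=
    fun k => Nat.rec ⟨[(x₀, y₀)], hgood0⟩ (fun k ih => G (F ih (eT k)) (eT k)) k with hL
  have hL0 : (x₀, y₀) ∈ (L 0).1 := List.mem_singleton_self _
  have hLsucc : ∀ k, L (k + 1) = G (F (L k) (eT k)) (eT k) := fun k => rfl
  have hLmono : ∀ k m, k ≤ m → ∀ p ∈ (L k).1, p ∈ (L m).1 := by
    intro k m hkm
    induction m with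
    | zero => intro p hp; rwa [Nat.le_zero.1 hkm] at hp
    | succ m ih =>
      intro p hp
      rcases Nat.le_succ_iff_eq_or_le.mp hkm with rfl | hkm'
      · exact hp
      · rw [hLsucc m]
        exact hG1 _ _ _ (hF1 _ _ _ (ih hkm' p hp))
  have hcovF : ∀ t, ∃ m s, (t, s) ∈ (L m).1 := by
    intro t
    obtain ⟨k, rfl⟩ := heT t
    obtain ⟨⟨p1, p2⟩, hp, hp1⟩ := List.mem_map.1 (hF2 (L k) (eT k))
    dsimp at hp1
    subst hp1
    refine ⟨k + 1, p2, ?_⟩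
    rw [hLsucc k]
    exact hG1 (F (L k) (eT k)) (eT k) _ hp
  have hcovS : ∀ s, ∃ m t, (t, s) ∈ (L m).1 := by
    intro s
    obtain ⟨k, rfl⟩ := heT s
    obtain ⟨⟨p1, p2⟩, hp, hp2⟩ := List.mem_map.1 (hG2 (F (L k) (eT k)) (eT k))
    dsimp at hp2
    subst hp2
    refine ⟨k + 1, p1, ?_⟩
    rw [hLsucc k]
    exact hp
  have hfun : ∀ m m' t s s', (t, s) ∈ (L m).1 → (t, s') ∈ (L m').1 → s = s' := by
    intro m m' t s s' h1 h2
    have h1' := hLmono m (max m m') (le_max_left _ _) _ h1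
    have h2' := hLmono m' (max m m') (le_max_right _ _) _ h2
    have := List.inj_on_of_nodup_map (L (max m m')).2.1 h1' h2' rfl
    exact congrArg Prod.snd this
  have hinj : ∀ m m' t t' s, (t, s) ∈ (L m).1 → (t', s) ∈ (L m').1 → t = t' := by
    intro m m' t t' s h1 h2
    have h1' := hLmono m (max m m') (le_max_left _ _) _ h1
    have h2' := hLmono m' (max m m') (le_max_right _ _) _ h2
    have := List.inj_on_of_nodup_map (L (max m m')).2.2.1 h1' h2' rfl
    exact congrArg Prod.fst this
  have hedge' : ∀ m m' t t' s s', (t, s) ∈ (L m).1 → (t', s') ∈ (L m').1 →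
      (R t t' ↔ R s s') := by
    intro m m' t t' s s' h1 h2
    by_cases hne : t = t'
    · subst hne
      have : s = s' := hfun m m' t s s' h1 h2
      subst this
      exact iff_of_false (hirr t) (hirr s)
    · have h1' := hLmono m (max m m') (le_max_left _ _) _ h1
      have h2' := hLmono m' (max m m') (le_max_right _ _) _ h2
      exact (L (max m m')).2.2.2 _ h1' _ h2' hne
  choose μ π hπ using hcovF
  refine ⟨π, ⟨?_, ?_⟩, ?_, ⟨x₀, ?_⟩⟩
  · intro t t' h
    exact hinj _ _ t t' (π t) (hπ t) (h ▸ hπ t')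
  · intro s
    obtain ⟨m, t, hm⟩ := hcovS s
    exact ⟨t, hfun _ m t (π t) s (hπ t) hm⟩
  · intro t t'
    exact hedge' _ _ t t' (π t) (π t') (hπ t) (hπ t')
  · have : π x₀ = y₀ := hfun _ 0 x₀ (π x₀) y₀ (hπ x₀) hL0
    rw [this]
    exact fun h => hxy h.symm

end Aux

/-- For `n ≥ 2`, the distinguishing number of the wreath product
`𝕋^∞[Iₙ]` (the random tournament with each vertex replaced by an independent set of
size `n`) is `n + 1`: there is a distinguishing coloring with `n+1` colors and none
with `n` colors. -/
theorem random_tournament_wreath_In_distinguishing_number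
    (n : ℕ) (hn : 2 ≤ n) (T : Type*) [Countable T] [Infinite T]
    (R : T → T → Prop)
    (hirr : ∀ x, ¬ R x x)
    (htot : ∀ x y : T, x ≠ y → (R x y ↔ ¬ R y x))
    (hext : ∀ A B : Finset T, Disjoint A B →
      ∃ x, x ∉ A ∧ x ∉ B ∧ (∀ a ∈ A, R x a) ∧ (∀ b ∈ B, R b x)) :
    (∃ c : T × Fin n → Fin (n + 1),
      ∀ g : (T × Fin n) ≃ (T × Fin n),
        (∀ x y : T × Fin n, R x.1 y.1 ↔ R (g x).1 (g y).1) →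
        (∀ v, c (g v) = c v) → ∀ v, g v = v) ∧
    (∀ c : T × Fin n → Fin n,
      ∃ g : (T × Fin n) ≃ (T × Fin n),
        (∀ x y : T × Fin n, R x.1 y.1 ↔ R (g x).1 (g y).1) ∧
        (∃ v, g v ≠ v) ∧ ∀ v, c (g v) = c v) := by
  classical
  have hn0 : 0 < n := by omega
  constructor
  · -- upper bound: a distinguishing coloring with n+1 colors
    obtain ⟨D, hD⟩ := exists_rigid_set R hirr htot hext
    refine ⟨fun v => if v.1 ∈ D then v.2.castSucc else v.2.succ, ?_⟩
    intro g hedge hcol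
    -- g preserves fibers
    have hfib : ∀ t (a b : Fin n), (g (t, a)).1 = (g (t, b)).1 := by
      intro t a b
      by_contra hne
      have h1 : ¬ R (g (t, a)).1 (g (t, b)).1 := fun h =>
        hirr t ((hedge (t, a) (t, b)).2 h)
      have h2 : ¬ R (g (t, b)).1 (g (t, a)).1 := fun h =>
        hirr t ((hedge (t, b) (t, a)).2 h)
      exact h1 ((htot _ _ hne).2 h2)
    set π : T → T := fun t => (g (t, ⟨0, hn0⟩)).1 with hπ
    have hπg : ∀ t (a : Fin n), (g (t, a)).1 = π t := fun t a => hfib t a ⟨0, hn0⟩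
    have hπinj : Function.Injective π := by
      intro t t' h
      by_contra hne
      by_cases hr : R t t'
      · have := (hedge (t, ⟨0, hn0⟩) (t', ⟨0, hn0⟩)).1 hr
        rw [show (g (t, (⟨0, hn0⟩ : Fin n))).1 = π t from rfl,
          show (g (t', (⟨0, hn0⟩ : Fin n))).1 = π t' from rfl, h] at this
        exact hirr _ this
      · have hr' : R t' t := by
          by_contra h'
          exact hr ((htot t t' hne).2 h')
        have := (hedge (t', ⟨0, hn0⟩) (t, ⟨0, hn0⟩)).1 hr'
        rw [show (g (t', (⟨0, hn0⟩ : Fin n))).1 = π t' from rfl,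
          show (g (t, (⟨0, hn0⟩ : Fin n))).1 = π t from rfl, h] at this
        exact hirr _ this
    have hπsurj : Function.Surjective π := by
      intro s
      refine ⟨(g.symm (s, ⟨0, hn0⟩)).1, ?_⟩
      have h1 : π (g.symm (s, ⟨0, hn0⟩)).1
          = (g ((g.symm (s, ⟨0, hn0⟩)).1, (g.symm (s, ⟨0, hn0⟩)).2)).1 := by
        rw [hπ]
        exact hfib _ _ _
      rw [h1, Prod.mk.eta, g.apply_symm_apply]
    have hπedge : ∀ t t', R t t' ↔ R (π t) (π t') := by
      intro t t'
      by_cases hne : t = t'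
      · subst hne
        exact iff_of_false (hirr t) (hirr (π t))
      · have := hedge (t, ⟨0, hn0⟩) (t', ⟨0, hn0⟩)
        simpa using this
    have hπD : ∀ t, t ∈ D ↔ π t ∈ D := by
      intro t
      constructor
      · intro htD
        by_contra hwD
        have hc := hcol (t, ⟨0, hn0⟩)
        have hg1 : g (t, ⟨0, hn0⟩) = (π t, (g (t, (⟨0, hn0⟩ : Fin n))).2) :=
          Prod.ext (hπg t _) rfl
        rw [hg1] at hc
        simp only [if_pos htD, if_neg hwD] at hc
        have := congrArg Fin.val hc
        simp [Fin.val_succ] at this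
      · intro hwD
        by_contra htD
        have hc := hcol (t, ⟨n - 1, by omega⟩)
        have hg1 : g (t, ⟨n - 1, by omega⟩) = (π t, (g (t, (⟨n - 1, by omega⟩ : Fin n))).2) :=
          Prod.ext (hπg t _) rfl
        rw [hg1] at hc
        simp only [if_pos hwD, if_neg htD] at hc
        have := congrArg Fin.val hc
        have hlt := (g (t, (⟨n - 1, by omega⟩ : Fin n))).2.isLt
        simp [Fin.val_succ] at this
        omega
    have hπid : ∀ t, π t = t := hD π ⟨hπinj, hπsurj⟩ hπedge hπD
    -- conclude g = id
    intro v
    obtain ⟨t, a⟩ := v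
    have h1 : (g (t, a)).1 = t := by rw [hπg t a, hπid]
    have hc := hcol (t, a)
    have hg1 : g (t, a) = (t, (g (t, a)).2) := Prod.ext h1 rfl
    rw [hg1] at hc ⊢
    by_cases htD : t ∈ D
    · simp only [if_pos htD] at hc
      have := congrArg Fin.val hc
      simp only [Fin.coe_castSucc] at this
      rw [Prod.mk.injEq]
      exact ⟨rfl, Fin.ext this⟩
    · simp only [if_neg htD] at hc
      have := congrArg Fin.val hc
      simp only [Fin.val_succ] at this
      rw [Prod.mk.injEq]
      exact ⟨rfl, Fin.ext (by omega)⟩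
  · -- lower bound: no distinguishing coloring with n colors
    intro c
    by_cases hc : ∃ t : T, ∃ a b : Fin n, a ≠ b ∧ c (t, a) = c (t, b)
    · obtain ⟨t, a, b, hab, hcab⟩ := hc
      refine ⟨Equiv.swap (t, a) (t, b), ?_, ⟨(t, a), ?_⟩, ?_⟩
      · have key : ∀ v : T × Fin n, (Equiv.swap (t, a) (t, b) v).1 = v.1 := by
          intro v
          rw [Equiv.swap_apply_def]
          split_ifs with h1 h2
          · rw [h1]
          · rw [h2]
          · rfl
        intro x y
        rw [key x, key y]
      · rw [Equiv.swap_apply_left]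
        intro h
        exact hab (congrArg Prod.snd h).symm
      · intro v
        rw [Equiv.swap_apply_def]
        split_ifs with h1 h2
        · rw [h1, hcab]
        · rw [h2, hcab]
        · rfl
    · push_neg at hc
      have hcinj : ∀ t : T, Function.Bijective (fun a : Fin n => c (t, a)) := by
        intro t
        rw [← Finite.injective_iff_bijective]
        intro a b h
        by_contra hne
        exact hc t a b hne h
      set E : T → (Fin n ≃ Fin n) := fun t => Equiv.ofBijective _ (hcinj t) with hE
      have hEc : ∀ t a, E t a = c (t, a) := fun t a => rfl
      obtain ⟨π, hπbij, hπedge, t₀, ht₀⟩ := exists_nontrivial_auto R hirr htot hext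
      set PP : T ≃ T := Equiv.ofBijective π hπbij with hPP
      have hPPπ : ∀ t, PP t = π t := fun t => rfl
      refine ⟨⟨fun v => (π v.1, (E (π v.1)).symm (E v.1 v.2)),
        fun v => (PP.symm v.1, (E (PP.symm v.1)).symm (E v.1 v.2)), ?_, ?_⟩, ?_, ⟨(t₀, ⟨0, hn0⟩), ?_⟩, ?_⟩
      · intro v
        obtain ⟨t, a⟩ := v
        dsimp only
        have h1 : PP.symm (π t) = t := PP.symm_apply_apply t
        rw [Prod.mk.injEq]
        refine ⟨h1, ?_⟩
        rw [Equiv.apply_symm_apply, h1, Equiv.symm_apply_apply]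
      · intro v
        obtain ⟨s, b⟩ := v
        dsimp only
        have h1 : π (PP.symm s) = s := PP.apply_symm_apply s
        rw [Prod.mk.injEq]
        refine ⟨h1, ?_⟩
        rw [Equiv.apply_symm_apply]
        conv_lhs => rw [h1]
        exact Equiv.symm_apply_apply _ _
      · intro x y
        exact hπedge x.1 y.1
      · intro h
        exact ht₀ (congrArg Prod.fst h)
      · intro v
        show c (π v.1, (E (π v.1)).symm (E v.1 v.2)) = c v
        rw [← hEc, Equiv.apply_symm_apply, hEc]
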